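/- For fixed x > 0 the family f_a(x), defined by f_a(x) = (1/a)·log(1+ax) for a > 0 and f_a(x) = (1−a)x for a ≤ 0, is continuous in a at a = 0 and strictly decreasing in a on all of ℝ. -/

import Mathlib

/-- For fixed `x > 0`, the family `a ↦ f_a(x)`, where
`f_a(x) = a⁻¹ log(1+ax)` for `a > 0` and `f_a(x) = (1-a)x` for `a ≤ 0`,
is continuous at `a = 0` and strictly decreasing in `a` on all of `ℝ`. -/
theorem stmt8
    (f : ℝ → ℝ → ℝ)
    (hf : ∀ a x, f a x = if 0 < a then a⁻¹ * Real.log (1 + a * x) else (1 - a) * x)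
    (x : ℝ) (hx : 0 < x) :
    ContinuousAt (fun a => f a x) 0 ∧ StrictAnti (fun a => f a x) := by
  have hfe : (fun a => f a x)
      = fun a => if 0 < a then a⁻¹ * Real.log (1 + a * x) else (1 - a) * x :=
    funext fun a => hf a x
  rw [hfe]
  set G : ℝ → ℝ := fun a => if 0 < a then a⁻¹ * Real.log (1 + a * x) else (1 - a) * x
    with hGdef
  have hG0 : G 0 = x := by simp [hGdef]
  have hGneg : ∀ a : ℝ, a ≤ 0 → G a = (1 - a) * x := by
    intro a ha; simp [hGdef, not_lt.mpr ha, ha.not_gt]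
  have hGpos : ∀ a : ℝ, 0 < a → G a = a⁻¹ * Real.log (1 + a * x) := by
    intro a ha; simp [hGdef, ha]
  -- derivative of L a = log (1 + a x)
  have hL : ∀ a : ℝ, 0 ≤ a →
      HasDerivAt (fun a => Real.log (1 + a * x)) (x / (1 + a * x)) a := by
    intro a ha
    have h1 : (0:ℝ) < 1 + a * x := by nlinarith
    have hin : HasDerivAt (fun a : ℝ => 1 + a * x) x a :=
      (hasDerivAt_mul_const x).const_add 1
    have := (Real.hasDerivAt_log h1.ne').comp a hin
    rw [div_eq_inv_mul]
    exact this
  -- continuity at 0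
  have hcont : ContinuousAt G 0 := by
    have hx0 : G 0 = x := hG0
    rw [ContinuousAt, hx0, ← nhdsLE_sup_nhdsGT (a := (0:ℝ)), Filter.tendsto_sup]
    constructor
    · have hc : Filter.Tendsto (fun a : ℝ => (1 - a) * x) (nhdsWithin 0 (Set.Iic 0)) (nhds x) := by
        have : Filter.Tendsto (fun a : ℝ => (1 - a) * x) (nhds 0) (nhds ((1 - 0) * x)) :=
          (Continuous.tendsto (by continuity) 0)
        simpa using this.mono_left nhdsWithin_le_nhds
      refine hc.congr' ?_
      filter_upwards [self_mem_nhdsWithin] with a ha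
      exact (hGneg a ha).symm
    · have hd : HasDerivAt (fun a => Real.log (1 + a * x)) x 0 := by
        simpa using hL 0 le_rfl
      have := hasDerivAt_iff_tendsto_slope.mp hd
      have h2 := this.mono_left (nhdsWithin_mono 0 (fun a (ha : a ∈ Set.Ioi 0) => ha.ne' : Set.Ioi 0 ⊆ {(0:ℝ)}ᶜ))
      refine h2.congr' ?_
      filter_upwards [self_mem_nhdsWithin] with a (ha : 0 < a)
      rw [slope_def_field, hGpos a ha]
      simp [div_eq_inv_mul]
  -- strict anti on Ici 0
  have hanti : StrictAntiOn G (Set.Ici 0) := by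
    apply strictAntiOn_of_deriv_neg (convex_Ici 0)
    · intro a ha
      rcases eq_or_lt_of_le (Set.mem_Ici.mp ha : (0:ℝ) ≤ a) with rfl | ha'
      · exact hcont.continuousWithinAt
      · have h1 : (0:ℝ) < 1 + a * x := by nlinarith
        have hH : HasDerivAt (fun a : ℝ => a⁻¹ * Real.log (1 + a * x))
            (-(a ^ 2)⁻¹ * Real.log (1 + a * x) + a⁻¹ * (x / (1 + a * x))) a :=
          (hasDerivAt_inv ha'.ne').mul (hL a ha'.le)
        have heq : (fun a : ℝ => a⁻¹ * Real.log (1 + a * x)) =ᶠ[nhds a] G := by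
          filter_upwards [Ioi_mem_nhds ha'] with b hb
          exact (hGpos b hb).symm
        exact (hH.continuousAt.congr heq).continuousWithinAt
    · intro a ha
      rw [interior_Ici] at ha
      have ha' : (0:ℝ) < a := ha
      have h1 : (0:ℝ) < 1 + a * x := by nlinarith
      have hH : HasDerivAt (fun a : ℝ => a⁻¹ * Real.log (1 + a * x))
          (-(a ^ 2)⁻¹ * Real.log (1 + a * x) + a⁻¹ * (x / (1 + a * x))) a :=
        (hasDerivAt_inv ha'.ne').mul (hL a ha'.le)
      have heq : (fun a : ℝ => a⁻¹ * Real.log (1 + a * x)) =ᶠ[nhds a] G := by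
        filter_upwards [Ioi_mem_nhds ha'] with b hb
        exact (hGpos b hb).symm
      rw [← heq.deriv_eq, hH.deriv]
      -- key inequality : a*x/(1+a*x) < log (1+a*x)
      have hkey : a * x / (1 + a * x) < Real.log (1 + a * x) := by
        have hu : (0:ℝ) < (1 + a * x)⁻¹ := by positivity
        have hu1 : (1 + a * x)⁻¹ ≠ 1 := by
          have : (1:ℝ) < 1 + a * x := by nlinarith
          exact ne_of_lt (by rw [inv_lt_one_iff₀]; right; exact this)
        have := Real.log_lt_sub_one_of_pos hu hu1
        rw [Real.log_inv] at this
        have h2 : (1 + a * x)⁻¹ - 1 = -(a * x / (1 + a * x)) := by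
          field_simp
          ring
        rw [h2] at this
        linarith
      have hfor : -(a ^ 2)⁻¹ * Real.log (1 + a * x) + a⁻¹ * (x / (1 + a * x))
          = (a * x / (1 + a * x) - Real.log (1 + a * x)) / a ^ 2 := by
        field_simp
        ring
      rw [hfor]
      apply div_neg_of_neg_of_pos (by linarith) (by positivity)
  refine ⟨hcont, ?_⟩
  intro a b hab
  rcases le_or_gt b 0 with hb | hb
  · rw [hGneg a (hab.le.trans hb), hGneg b hb]
    nlinarith
  · rcases le_or_gt 0 a with ha | ha
    · exact hanti ha (le_of_lt (lt_of_le_of_lt ha hab)) hab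
    · have h1 : G b < G 0 := hanti (Set.mem_Ici.mpr le_rfl) hb.le hb
      have h2 : G 0 < G a := by
        rw [hG0, hGneg a ha.le]; nlinarith
      linarith
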